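/- Let K be a field of characteristic 0, n ≥ 1, and take the diagonal matching field ℓ = n. If the restricted matching field ideal F_{n,n,w} is nonzero and monomial-free (i.e., w ∈ T_{n,n}), then w has the descending property, i.e. w ∈ S_n^>. -/

import Mathlib

open MvPolynomial

/-- Index type for the Plücker variables `P_J`: nonempty proper subsets of `{1,…,n}`
(encoded as `Fin n`, where `i : Fin n` stands for the value `i+1`). -/
abbrev PIdx (n : ℕ) := {J : Finset (Fin n) // J.Nonempty ∧ J ≠ Finset.univ}

/-- The transposition (1 2) acting on (1-based) row indices. -/
def swap12 (r : ℕ) : ℕ := if r = 1 then 2 else if r = 2 then 1 else r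

/-- The image of the Plücker variable `P_J` under the monomial map `φ_ℓ` associated to the
block diagonal matching field `B_ℓ`: writing `J = {j_1 < … < j_k}` (as 1-based values),
it is `sgn(σ)·x_{σ(1),j_1}⋯x_{σ(k),j_k}` where `σ = id` if `|J| = 1` or
`|J ∩ {1,…,ℓ}| ≥ 2`, and `σ = (1 2)` otherwise. Variables `x_{i,j}` are indexed by
pairs of 1-based natural numbers. -/
noncomputable def phiVal (K : Type*) [CommRing K] (n ℓ : ℕ) (J : Finset (Fin n)) :
    MvPolynomial (ℕ × ℕ) K :=
  let l : List ℕ := (J.sort (· ≤ ·)).map (fun j => (j : ℕ) + 1)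
  if J.card = 1 ∨ 2 ≤ (J.filter (fun j : Fin n => (j : ℕ) + 1 ≤ ℓ)).card then
    ((List.range l.length).map
      (fun r => (X (r + 1, l.getD r 0) : MvPolynomial (ℕ × ℕ) K))).prod
  else
    - ((List.range l.length).map
      (fun r => (X (swap12 (r + 1), l.getD r 0) : MvPolynomial (ℕ × ℕ) K))).prod

/-- The monomial map `φ_ℓ : K[P_J] → K[x_{i,j}]`. -/
noncomputable def phiMap (K : Type*) [CommRing K] (n ℓ : ℕ) :
    MvPolynomial (PIdx n) K →ₐ[K] MvPolynomial (ℕ × ℕ) K :=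
  aeval (fun J => phiVal K n ℓ J.1)

/-- The matching field ideal `F_{n,ℓ} = ker φ_ℓ`. -/
noncomputable def Fnl (K : Type*) [CommRing K] (n ℓ : ℕ) :
    Ideal (MvPolynomial (PIdx n) K) :=
  RingHom.ker (phiMap K n ℓ)

/-- Componentwise comparison `A ≤ B` of two finsets via their increasing enumerations. -/
def finsetLE {n : ℕ} (A B : Finset (Fin n)) : Prop :=
  List.Forall₂ (· ≤ ·) (A.sort (· ≤ ·)) (B.sort (· ≤ ·))

/-- The set `{w_1, …, w_k}` of the first `k` values of the one-line notation of `w`. -/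
def initSet {n : ℕ} (w : Equiv.Perm (Fin n)) (k : ℕ) : Finset (Fin n) :=
  (Finset.univ.filter (fun i : Fin n => (i : ℕ) < k)).image w

/-- `S_w`: the set of subsets `J` with `J ≰ {w_1,…,w_{|J|}}`. -/
def Sw {n : ℕ} (w : Equiv.Perm (Fin n)) : Set (Finset (Fin n)) :=
  {J | ¬ finsetLE J (initSet w J.card)}

/-- Index type for the Plücker variables that do not vanish on the Schubert variety `X(w)`. -/
abbrev RIdx (n : ℕ) (w : Equiv.Perm (Fin n)) := {J : PIdx n // J.1 ∉ Sw w}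

open Classical in
/-- The projection `π_w` sending `P_J ↦ 0` for `J ∈ S_w` and `P_J ↦ P_J` otherwise. -/
noncomputable def piw (K : Type*) [CommRing K] {n : ℕ} (w : Equiv.Perm (Fin n)) :
    MvPolynomial (PIdx n) K →ₐ[K] MvPolynomial (RIdx n w) K :=
  aeval (fun J => if h : J.1 ∈ Sw w then 0 else X (⟨J, h⟩ : RIdx n w))

/-- The restricted matching field ideal `F_{n,ℓ,w} = π_w(F_{n,ℓ})`. -/
noncomputable def Fnlw (K : Type*) [CommRing K] (n ℓ : ℕ) (w : Equiv.Perm (Fin n)) :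
    Ideal (MvPolynomial (RIdx n w) K) :=
  Ideal.map (piw K w) (Fnl K n ℓ)

/-- An ideal of a polynomial ring is monomial-free if it contains no (nonzero) monomial. -/
def MonomialFree {σ K : Type*} [CommSemiring K] (I : Ideal (MvPolynomial σ K)) : Prop :=
  ∀ m : σ →₀ ℕ, (monomial m (1 : K)) ∉ I

/-- The adjacent transposition `s_{i+1} = (i+1, i+2)` (1-based), i.e. the swap of the
0-based positions `i` and `i+1` of `Fin n`. -/
def adjT (n i : ℕ) : Equiv.Perm (Fin n) :=
  if h : i + 1 < n then Equiv.swap ⟨i, Nat.lt_of_succ_lt h⟩ ⟨i + 1, h⟩ else 1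

/-- `Z_n`: permutations that are products of adjacent transpositions with pairwise
distance at least 2 between the indices. -/
def Zset (n : ℕ) : Set (Equiv.Perm (Fin n)) :=
  {w | ∃ l : List ℕ, (∀ i ∈ l, i + 1 < n) ∧
        l.Pairwise (fun i j => i + 2 ≤ j ∨ j + 2 ≤ i) ∧
        w = (l.map (adjT n)).prod}

/-- `oneLine w i = w_i` : the `i`-th entry (1-based, with 1-based values) of the
one-line notation of `w`. -/
def oneLine {n : ℕ} (w : Equiv.Perm (Fin n)) (i : ℕ) : ℕ :=
  if h : i - 1 < n then (w ⟨i - 1, h⟩ : ℕ) + 1 else 0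

/-- The (1-based) position `t` with `w_t = n`. -/
def posOfTop {n : ℕ} (w : Equiv.Perm (Fin n)) : ℕ :=
  if h : 0 < n then ((w.symm ⟨n - 1, by omega⟩ : ℕ) + 1) else 0

/-- `deleteTop w u` holds iff `u = ul(w)` is obtained from `w` by deleting the entry `n`
from its one-line notation. -/
def deleteTop {n : ℕ} (w : Equiv.Perm (Fin n)) (u : Equiv.Perm (Fin (n - 1))) : Prop :=
  ∀ i, 1 ≤ i → i ≤ n - 1 →
    oneLine u i = if i < posOfTop w then oneLine w i else oneLine w (i + 1)

/-- The descending property: writing `w_t = n`, one has `w_t > w_{t+1} > … > w_n`. -/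
def descendingProp {n : ℕ} (w : Equiv.Perm (Fin n)) : Prop :=
  ∀ i, posOfTop w ≤ i → i < n → oneLine w (i + 1) < oneLine w i

/-- `T_{n,ℓ}`: the set of permutations `w` for which `F_{n,ℓ,w}` is nonzero and
monomial-free. -/
def Tset (K : Type*) [Field K] (n ℓ : ℕ) : Set (Equiv.Perm (Fin n)) :=
  {w | Fnlw K n ℓ w ≠ ⊥ ∧ MonomialFree (Fnlw K n ℓ w)}

/-- The one-line notation of `w` as a list of 1-based values. -/
def olList {n : ℕ} (w : Equiv.Perm (Fin n)) : List ℕ :=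
  (List.finRange n).map (fun i => (w i : ℕ) + 1)

/-- A list of naturals is 312-free if it has no subsequence of type 312. -/
def List312Free (l : List ℕ) : Prop :=
  ¬ ∃ i j k : ℕ, i < j ∧ j < k ∧ k < l.length ∧
      l.getD j 0 < l.getD k 0 ∧ l.getD k 0 < l.getD i 0

/-- The decreasing list `[a, a-1, …, 1]`. -/
def descTo1 (a : ℕ) : List ℕ := (List.range a).reverse.map (· + 1)

/-- The set `P_ℓ ⊆ S_n`. -/
def Pset (n ℓ : ℕ) : Set (Equiv.Perm (Fin n)) :=
  if ℓ = n then {w | List312Free (olList w)}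
  else
    {w | (¬ List312Free (olList w) →
            oneLine w 2 = ℓ ∧ oneLine w 2 < oneLine w 1 ∧
            List312Free ((olList w).erase ℓ)) ∧
         (∀ m, 3 ≤ m → m ≤ n →
            (olList w).filter (fun v => v ≤ m) = (m - 1) :: m :: descTo1 (m - 2) →
            oneLine w 1 < oneLine w 2 ∧ oneLine w 2 ≤ ℓ ∧
            (olList w).filter (fun v => v ≤ oneLine w 2) =
              oneLine w 1 :: oneLine w 2 ::
                ((descTo1 (oneLine w 2 - 1)).filter (fun v => v ≠ oneLine w 1)))}

/-- The set `A_1`. -/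
def A1set (n : ℕ) : Set (Equiv.Perm (Fin n)) :=
  {w | (∃ u : Equiv.Perm (Fin (n - 1)), deleteTop w u ∧ u ∈ Zset (n - 1)) ∧
       oneLine w n = n - 2 ∧
       ({oneLine w (n - 2), oneLine w (n - 1)} : Set ℕ) = {n - 1, n}}

/-- The set `A_2` (with `ul(w) ∈ T_{n-1,ℓ'}`). -/
def A2set (K : Type*) [Field K] (n ℓ' : ℕ) : Set (Equiv.Perm (Fin n)) :=
  {w | (∃ u : Equiv.Perm (Fin (n - 1)),
          deleteTop w u ∧ u ∈ Tset K (n - 1) ℓ' ∧ descendingProp u) ∧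
       (∀ s t, 1 ≤ s → s ≤ n → 1 ≤ t → t ≤ n →
          oneLine w s = n - 1 → oneLine w t = n → s - 1 ≤ t)}


section listlemmas

variable {α : Type*} [LinearOrder α]

lemma countP_le_of_forall₂ {l₁ l₂ : List α}
    (h : List.Forall₂ (· ≤ ·) l₁ l₂) (c : α) :
    l₂.countP (fun x => decide (x < c)) ≤ l₁.countP (fun x => decide (x < c)) := by
  induction h with
  | nil => simp
  | @cons x y t₁ t₂ hxy _ ih =>
    simp only [List.countP_cons]
    have : (if (decide (y < c)) = true then 1 else 0) ≤
        (if (decide (x < c)) = true then 1 else 0) := by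
      by_cases hy : y < c
      · have : x < c := lt_of_le_of_lt hxy hy
        simp [hy, this]
      · simp [hy]
    omega

lemma forall₂_of_countP : ∀ {l₁ l₂ : List α}, l₁.Pairwise (· < ·) → l₂.Pairwise (· < ·) →
    l₁.length = l₂.length →
    (∀ c, l₂.countP (fun x => decide (x < c)) ≤ l₁.countP (fun x => decide (x < c))) →
    List.Forall₂ (· ≤ ·) l₁ l₂
  | [], [], _, _, _, _ => List.Forall₂.nil
  | [], _ :: _, _, _, hlen, _ => by simp at hlen
  | _ :: _, [], _, _, hlen, _ => by simp at hlen
  | x :: t₁, y :: t₂, h₁, h₂, hlen, h => by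
    rw [List.pairwise_cons] at h₁ h₂
    have hxy : x ≤ y := by
      by_contra hyx
      push_neg at hyx
      have h0 : (x :: t₁).countP (fun z => decide (z < x)) = 0 := by
        rw [List.countP_eq_zero]
        intro z hz
        simp only [decide_eq_true_eq, not_lt]
        rcases List.mem_cons.1 hz with rfl | hz
        · exact le_refl _
        · exact le_of_lt (h₁.1 z hz)
      have h1 : 0 < (y :: t₂).countP (fun z => decide (z < x)) := by
        rw [List.countP_pos_iff]
        exact ⟨y, List.mem_cons_self, by simpa using hyx⟩
      have := h x
      omega
    refine List.Forall₂.cons hxy (forall₂_of_countP h₁.2 h₂.2 (by simpa using hlen) ?_)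
    intro c
    by_cases hc : x < c
    · by_cases hyc : y < c
      · have := h c
        simp only [List.countP_cons, decide_eq_true_eq, hc, hyc, if_true] at this
        omega
      · have : t₂.countP (fun z => decide (z < c)) = 0 := by
          rw [List.countP_eq_zero]
          intro z hz
          simp only [decide_eq_true_eq, not_lt]
          exact le_of_lt (lt_of_le_of_lt (not_lt.1 hyc) (h₂.1 z hz))
        omega
    · have : t₂.countP (fun z => decide (z < c)) = 0 := by
        rw [List.countP_eq_zero]
        intro z hz
        simp only [decide_eq_true_eq, not_lt]
        calc c ≤ x := not_lt.1 hc
        _ ≤ y := hxy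
        _ ≤ z := le_of_lt (h₂.1 z hz)
      omega

end listlemmas

section cnt

variable {n : ℕ}

/-- number of elements of `A` strictly below `c` -/
def cnt (A : Finset (Fin n)) (c : Fin n) : ℕ := (A.filter (fun x => x < c)).card

lemma countP_sort_eq (A : Finset (Fin n)) (c : Fin n) :
    (A.sort (· ≤ ·)).countP (fun x => decide (x < c)) = cnt A c := by
  have h1 : (↑(A.sort (· ≤ ·)) : Multiset (Fin n)) = A.val := Finset.sort_eq _ _
  have h2 : Multiset.countP (fun x => x < c) (↑(A.sort (· ≤ ·)) : Multiset (Fin n))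
      = Multiset.countP (fun x => x < c) A.val := by rw [h1]
  rw [Multiset.coe_countP] at h2
  rw [h2, cnt, Finset.card_def, Finset.filter_val, Multiset.countP_eq_card_filter]

lemma finsetLE_of_cnt {A B : Finset (Fin n)} (hcard : A.card = B.card)
    (h : ∀ c, cnt B c ≤ cnt A c) : finsetLE A B := by
  refine forall₂_of_countP (Finset.sortedLT_sort A).pairwise (Finset.sortedLT_sort B).pairwise ?_ ?_
  · rw [Finset.length_sort, Finset.length_sort, hcard]
  · intro c; rw [countP_sort_eq, countP_sort_eq]; exact h c

lemma cnt_le_of_finsetLE {A B : Finset (Fin n)} (h : finsetLE A B) (c : Fin n) :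
    cnt B c ≤ cnt A c := by
  rw [← countP_sort_eq, ← countP_sort_eq]
  exact countP_le_of_forall₂ h c

end cnt
section initset

variable {n : ℕ} (w : Equiv.Perm (Fin n))

lemma mem_initSet {x : Fin n} {k : ℕ} : x ∈ initSet w k ↔ ((w.symm x : Fin n) : ℕ) < k := by
  simp only [initSet, Finset.mem_image, Finset.mem_filter, Finset.mem_univ, true_and]
  constructor
  · rintro ⟨j, hj, rfl⟩
    simpa using hj
  · intro h
    exact ⟨w.symm x, h, by simp⟩

lemma initSet_mono {k k' : ℕ} (h : k ≤ k') : initSet w k ⊆ initSet w k' := by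
  intro x hx
  rw [mem_initSet] at hx ⊢
  omega

lemma card_initSet {k : ℕ} (hk : k < n) : (initSet w k).card = k := by
  rw [initSet, Finset.card_image_of_injective _ w.injective]
  have : (Finset.univ.filter (fun i : Fin n => (i : ℕ) < k)) = Finset.Iio ⟨k, hk⟩ := by
    ext x
    simp [Fin.lt_iff_val_lt_val]
  rw [this, Fin.card_Iio]

lemma ne_univ_of_card_lt {S : Finset (Fin n)} (h : S.card < n) : S ≠ Finset.univ := by
  intro he
  rw [he, Finset.card_univ, Fintype.card_fin] at h
  omega

lemma filt_insert_lt {S : Finset (Fin n)} {b c : Fin n} (hcb : c ≤ b) :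
    (insert b S).filter (fun x => x < c) = S.filter (fun x => x < c) := by
  ext x
  simp only [Finset.mem_filter, Finset.mem_insert]
  constructor
  · rintro ⟨rfl | hx, hxc⟩
    · exact absurd hxc (not_lt.2 hcb)
    · exact ⟨hx, hxc⟩
  · rintro ⟨hx, hxc⟩
    exact ⟨Or.inr hx, hxc⟩

lemma filt_filt_lt {S : Finset (Fin n)} {b c : Fin n} (hcb : c ≤ b) :
    (S.filter (fun x => x < b)).filter (fun x => x < c) = S.filter (fun x => x < c) := by
  rw [Finset.filter_filter]
  ext x
  simp only [Finset.mem_filter]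
  constructor
  · rintro ⟨hx, _, h2⟩; exact ⟨hx, h2⟩
  · rintro ⟨hx, h2⟩; exact ⟨hx, lt_of_lt_of_le h2 hcb, h2⟩

lemma erase_filt_lt {S : Finset (Fin n)} {a c : Fin n} :
    (S.erase a).filter (fun x => x < c) = (S.filter (fun x => x < c)).erase a := by
  ext x
  simp only [Finset.mem_filter, Finset.mem_erase]
  tauto

end initset
section Gdef

variable (K : Type*) [CommRing K]

/-- auxiliary product of variables with row offset -/
noncomputable def G (off : ℕ) (l : List ℕ) : MvPolynomial (ℕ × ℕ) K :=
  ((List.range l.length).map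
    (fun r => (X (off + r + 1, l.getD r 0) : MvPolynomial (ℕ × ℕ) K))).prod

lemma G_append (off : ℕ) (l₁ l₂ : List ℕ) :
    G K off (l₁ ++ l₂) = G K off l₁ * G K (off + l₁.length) l₂ := by
  unfold G
  rw [List.length_append, List.range_add, List.map_append, List.prod_append, List.map_map]
  congr 1
  · congr 1
    apply List.map_congr_left
    intro r hr
    rw [List.mem_range] at hr
    rw [List.getD_append _ _ _ _ hr]
  · congr 1
    apply List.map_congr_left
    intro r hr
    rw [List.mem_range] at hr
    simp only [Function.comp]
    rw [List.getD_append_right _ _ _ _ (Nat.le_add_right _ _), Nat.add_sub_cancel_left]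
    have : off + (l₁.length + r) + 1 = off + l₁.length + r + 1 := by omega
    rw [this]

lemma G_singleton (off : ℕ) (x : ℕ) : G K off [x] = X (off + 1, x) := by
  unfold G
  simp [List.range_succ]

lemma phiVal_eq {n : ℕ} (J : Finset (Fin n)) (hJ : J.Nonempty) :
    phiVal K n n J = G K 0 ((J.sort (· ≤ ·)).map (fun j : Fin n => (j : ℕ) + 1)) := by
  have hfil : J.filter (fun j : Fin n => (j : ℕ) + 1 ≤ n) = J :=
    Finset.filter_true_of_mem (fun j _ => j.isLt)
  have hcard : 1 ≤ J.card := Finset.card_pos.2 hJ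
  have hcond : J.card = 1 ∨ 2 ≤ (J.filter (fun j : Fin n => (j : ℕ) + 1 ≤ n)).card := by
    rw [hfil]; omega
  have hfm0 : ∀ l : List (Fin n), l.flatMap (fun a => [(a : ℕ)]) =
      l.map (fun a : Fin n => (a : ℕ)) := by
    intro l
    induction l with
    | nil => rfl
    | cons x t ih => simp [List.flatMap_cons, ih]; exact List.map_eq_flatMap.symm
  have hfm : ((J.sort (· ≤ ·)) >>= fun a => pure ((a : ℕ))) =
      (J.sort (· ≤ ·)).map (fun a : Fin n => (a : ℕ)) := by
    simpa using hfm0 _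
  rw [phiVal, if_pos hcond]
  unfold G
  rw [hfm]
  simp only [List.length_map, Finset.length_sort, List.map_map, Function.comp_def, Nat.zero_add]

end Gdef

section sortdecomp

variable {n : ℕ}

lemma sort_eq_of {S : Finset (Fin n)} {l : List (Fin n)}
    (hperm : (↑l : Multiset (Fin n)) = S.val) (hs : l.Pairwise (· ≤ ·)) :
    S.sort (· ≤ ·) = l := by
  apply List.Perm.eq_of_pairwise' (Finset.pairwise_sort _ _) hs
  rw [← Multiset.coe_eq_coe, Finset.sort_eq, hperm]

end sortdecomp
theorem stmt7 (K : Type*) [Field K] [CharZero K] (n : ℕ) (hn : 1 ≤ n)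
    (w : Equiv.Perm (Fin n)) (hw : w ∈ Tset K n n) : descendingProp w := by
  classical
  by_contra hdesc
  unfold descendingProp at hdesc
  push_neg at hdesc
  obtain ⟨i, hti, hin, hnlt⟩ := hdesc
  have hn0 : 0 < n := hn
  have hh : n - 1 < n := by omega
  set z : Fin n := ⟨n - 1, hh⟩ with hz
  have hti' : ((w.symm z : Fin n) : ℕ) + 1 ≤ i := by
    rw [posOfTop, dif_pos hn0] at hti
    exact hti
  have hTi : ((w.symm z : Fin n) : ℕ) < i := by omega
  have hi1 : 1 ≤ i := by omega
  have hi1n : i - 1 < n := by omega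
  set a : Fin n := w ⟨i - 1, hi1n⟩ with ha
  set b : Fin n := w ⟨i, hin⟩ with hb
  have hoa : oneLine w i = (a : ℕ) + 1 := by
    rw [ha, oneLine, dif_pos hi1n]
  have hob : oneLine w (i + 1) = (b : ℕ) + 1 := by
    rw [hb, oneLine]
    simp only [Nat.add_sub_cancel]
    rw [dif_pos hin]
  have hab : a < b := by
    have hle : (a : ℕ) ≤ (b : ℕ) := by
      rw [hoa, hob] at hnlt; omega
    have hne : a ≠ b := by
      intro h
      have h2 := w.injective h
      rw [Fin.mk.injEq] at h2
      omega
    exact lt_of_le_of_ne (by rwa [Fin.le_def]) hne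
  set I : Finset (Fin n) := initSet w i with hI
  have haI : a ∈ I := by
    rw [hI, mem_initSet, ha, Equiv.symm_apply_apply]
    show i - 1 < i
    omega
  have hbI : b ∉ I := by
    rw [hI, mem_initSet, hb, Equiv.symm_apply_apply]
    show ¬ i < i
    omega
  have hzI : z ∈ I := by
    rw [hI, mem_initSet]; exact hTi
  have hbz : b < z := by
    have hne : b ≠ z := by
      intro h
      have h2 : w.symm z = ⟨i, hin⟩ := by rw [← h, hb, Equiv.symm_apply_apply]
      rw [h2] at hTi
      simp at hTi
    rw [Fin.lt_def]
    have h1 : (b : ℕ) < n := b.isLt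
    have h2 : (b : ℕ) ≠ n - 1 := fun h => hne (Fin.ext h)
    show (b : ℕ) < n - 1
    omega
  have cardI : I.card = i := card_initSet w hin
  set Y : Finset (Fin n) := I.filter (fun x => x < b) with hY
  set p : ℕ := Y.card with hp
  have haY : a ∈ Y := Finset.mem_filter.2 ⟨haI, hab⟩
  have hp1 : 1 ≤ p := Finset.card_pos.2 ⟨a, haY⟩
  have hpi : p ≤ i - 1 := by
    have hsub : Y ⊆ I.erase z := by
      intro x hx
      rcases Finset.mem_filter.1 hx with ⟨hxI, hxb⟩
      exact Finset.mem_erase.2 ⟨ne_of_lt (lt_trans hxb hbz), hxI⟩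
    have h3 := Finset.card_le_card hsub
    rw [Finset.card_erase_of_mem hzI, cardI] at h3
    omega
  have hpn : p < n := by omega
  set SX : Finset (Fin n) := insert b (Y.erase a) with hSX
  set SK : Finset (Fin n) := insert b (I.erase a) with hSK
  have hbYe : b ∉ Y.erase a := by
    intro h
    exact hbI (Finset.filter_subset _ _ (Finset.mem_of_mem_erase h))
  have hbIe : b ∉ I.erase a := fun h => hbI (Finset.mem_of_mem_erase h)
  have cardX : SX.card = p := by
    rw [hSX, Finset.card_insert_of_notMem hbYe, Finset.card_erase_of_mem haY, ← hp]
    omega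
  have cardK : SK.card = i := by
    rw [hSK, Finset.card_insert_of_notMem hbIe, Finset.card_erase_of_mem haI, cardI]
    omega
  set Wp : Finset (Fin n) := initSet w p with hWp
  have cardWp : Wp.card = p := card_initSet w hpn
  have haWp : a ∉ Wp := by
    rw [hWp, mem_initSet, ha, Equiv.symm_apply_apply]
    show ¬ i - 1 < p
    omega
  have hWpI : Wp ⊆ I := by
    rw [hWp, hI]
    exact initSet_mono w (by omega)
  -- filter computations
  have keyX : ∀ c : Fin n, c ≤ b →
      SX.filter (fun x => x < c) = (I.filter (fun x => x < c)).erase a := by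
    intro c hcb
    rw [hSX, filt_insert_lt hcb]
    have h4 : Y.erase a = (I.erase a).filter (fun x => x < b) := by
      rw [hY, erase_filt_lt]
    rw [h4, filt_filt_lt hcb, erase_filt_lt]
  have keyK : ∀ c : Fin n, c ≤ b →
      SK.filter (fun x => x < c) = (I.filter (fun x => x < c)).erase a := by
    intro c hcb
    rw [hSK, filt_insert_lt hcb, erase_filt_lt]
  -- S_w memberships
  have hKSw : SK ∈ Sw w := by
    show ¬ finsetLE SK (initSet w SK.card)
    rw [cardK, ← hI]
    intro hle
    have hcnt := cnt_le_of_finsetLE hle b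
    simp only [cnt] at hcnt
    rw [keyK b le_rfl] at hcnt
    have haIb : a ∈ I.filter (fun x => x < b) := Finset.mem_filter.2 ⟨haI, hab⟩
    rw [Finset.card_erase_of_mem haIb] at hcnt
    have h5 : 1 ≤ (I.filter (fun x => x < b)).card := Finset.card_pos.2 ⟨a, haIb⟩
    omega
  have hXSw : SX ∉ Sw w := by
    show ¬ ¬ finsetLE SX (initSet w SX.card)
    rw [cardX, ← hWp, not_not]
    apply finsetLE_of_cnt (by rw [cardX, cardWp])
    intro c
    by_cases hcb : c ≤ b
    · simp only [cnt]
      rw [keyX c hcb]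
      apply Finset.card_le_card
      intro x hx
      rcases Finset.mem_filter.1 hx with ⟨hxW, hxc⟩
      exact Finset.mem_erase.2 ⟨fun h => haWp (h ▸ hxW), Finset.mem_filter.2 ⟨hWpI hxW, hxc⟩⟩
    · push_neg at hcb
      have h6 : SX.filter (fun x => x < c) = SX := by
        apply Finset.filter_true_of_mem
        intro x hx
        rcases Finset.mem_insert.1 hx with rfl | hx
        · exact hcb
        · exact lt_trans (Finset.mem_filter.1 (Finset.mem_of_mem_erase hx)).2 hcb
      simp only [cnt]
      rw [h6, cardX]
      calc (Wp.filter (fun x => x < c)).card ≤ Wp.card := Finset.card_filter_le _ _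
      _ = p := cardWp
  have hISw : I ∉ Sw w := by
    show ¬ ¬ finsetLE I (initSet w I.card)
    rw [cardI, ← hI, not_not, finsetLE]
    exact List.forall₂_same.2 (fun x _ => le_refl x)
  -- sorted list decompositions
  set Z : Finset (Fin n) := I.filter (fun x => ¬ x < b) with hZ
  set Pl : List (Fin n) := Y.sort (· ≤ ·) with hPl
  set Pl' : List (Fin n) := (Y.erase a).sort (· ≤ ·) with hPl'
  set Ql : List (Fin n) := Z.sort (· ≤ ·) with hQl
  have memPl' : ∀ x ∈ Pl', x < b := by
    intro x hx
    rw [hPl', Finset.mem_sort] at hx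
    exact (Finset.mem_filter.1 (Finset.mem_of_mem_erase hx)).2
  have memPl : ∀ x ∈ Pl, x < b := by
    intro x hx
    rw [hPl, Finset.mem_sort] at hx
    exact (Finset.mem_filter.1 hx).2
  have memQl : ∀ x ∈ Ql, b ≤ x := by
    intro x hx
    rw [hQl, Finset.mem_sort] at hx
    exact not_lt.1 (Finset.mem_filter.1 hx).2
  have hPval : (↑Pl : Multiset (Fin n)) = Y.val := by rw [hPl, Finset.sort_eq]
  have hPval' : (↑Pl' : Multiset (Fin n)) = (Y.erase a).val := by rw [hPl', Finset.sort_eq]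
  have hQval : (↑Ql : Multiset (Fin n)) = Z.val := by rw [hQl, Finset.sort_eq]
  have hIval : I.val = Y.val + Z.val := by
    rw [hY, hZ, Finset.filter_val, Finset.filter_val]
    exact (Multiset.filter_add_not (fun x => x < b) I.val).symm
  have sortedXlist : (Pl' ++ [b]).Pairwise (· ≤ ·) := by
    rw [List.pairwise_append]
    refine ⟨Finset.pairwise_sort _ _, by simp, ?_⟩
    intro x hx y hy
    rw [List.mem_singleton] at hy
    subst hy
    exact le_of_lt (memPl' x hx)
  have sortX : SX.sort (· ≤ ·) = Pl' ++ [b] := by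
    apply sort_eq_of _ sortedXlist
    rw [← Multiset.coe_add, hPval', Multiset.coe_singleton, hSX,
      Finset.insert_val_of_notMem hbYe, add_comm, Multiset.singleton_add]
  have sortI : I.sort (· ≤ ·) = Pl ++ Ql := by
    apply sort_eq_of
    · rw [← Multiset.coe_add, hPval, hQval, hIval]
    · rw [List.pairwise_append]
      refine ⟨Finset.pairwise_sort _ _, Finset.pairwise_sort _ _, ?_⟩
      intro x hx y hy
      exact le_of_lt (lt_of_lt_of_le (memPl x hx) (memQl y hy))
  have sortK : SK.sort (· ≤ ·) = (Pl' ++ [b]) ++ Ql := by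
    apply sort_eq_of
    · have e1 : (I.erase a).val = (Y.erase a).val + Z.val := by
        rw [Finset.erase_val, Finset.erase_val, hIval,
          Multiset.erase_add_left_pos _ (Finset.mem_val.mpr haY)]
      rw [hSK, Finset.insert_val_of_notMem hbIe, e1, ← Multiset.coe_add, ← Multiset.coe_add,
        hPval', Multiset.coe_singleton, hQval, ← Multiset.singleton_add,
        add_comm ((Y.erase a).val) ({b} : Multiset (Fin n)), add_assoc]
    · rw [List.pairwise_append]
      refine ⟨sortedXlist, Finset.pairwise_sort _ _, ?_⟩
      intro x hx y hy
      rcases List.mem_append.1 hx with hx | hx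
      · exact le_of_lt (lt_of_lt_of_le (memPl' x hx) (memQl y hy))
      · rw [List.mem_singleton] at hx
        subst hx
        exact memQl y hy
  -- the phi values
  set fn : Fin n → ℕ := fun j : Fin n => (j : ℕ) + 1 with hfn
  set mP : List ℕ := Pl.map fn with hmP
  set mP' : List ℕ := Pl'.map fn with hmP'
  set mQ : List ℕ := Ql.map fn with hmQ
  have lenP' : mP'.length = p - 1 := by
    rw [hmP', List.length_map, hPl', Finset.length_sort, Finset.card_erase_of_mem haY, ← hp]
  have lenP : mP.length = p := by
    rw [hmP, List.length_map, hPl, Finset.length_sort, ← hp]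
  have hp11 : p - 1 + 1 = p := by omega
  have hXne : SX.Nonempty := ⟨b, Finset.mem_insert_self _ _⟩
  have hKne : SK.Nonempty := ⟨b, Finset.mem_insert_self _ _⟩
  have hIne : I.Nonempty := ⟨a, haI⟩
  have hYne : Y.Nonempty := ⟨a, haY⟩
  have phiX : phiVal K n n SX = G K 0 mP' * X (p, fn b) := by
    rw [phiVal_eq K SX hXne, sortX, List.map_append, ← hmP', G_append, Nat.zero_add, lenP']
    simp only [List.map_singleton]
    rw [G_singleton, hp11]
  have phiI : phiVal K n n I = G K 0 mP * G K p mQ := by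
    rw [phiVal_eq K I hIne, sortI, List.map_append, ← hmP, ← hmQ, G_append, Nat.zero_add, lenP]
  have phiY : phiVal K n n Y = G K 0 mP := by
    rw [phiVal_eq K Y hYne, ← hPl, ← hmP]
  have phiK : phiVal K n n SK = G K 0 mP' * X (p, fn b) * G K p mQ := by
    rw [phiVal_eq K SK hKne, sortK, List.map_append, List.map_append, ← hmP', ← hmQ]
    rw [G_append, G_append, Nat.zero_add, lenP', List.length_append, lenP']
    simp only [List.map_singleton, List.length_singleton]
    rw [G_singleton, hp11]
    simp only [hfn, Nat.zero_add]
  -- the PIdx elements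
  set JX : PIdx n := ⟨SX, hXne, ne_univ_of_card_lt (lt_of_le_of_lt (le_of_eq cardX) hpn)⟩
    with hJX
  set JI : PIdx n := ⟨I, hIne, ne_univ_of_card_lt (lt_of_le_of_lt (le_of_eq cardI) hin)⟩
    with hJI
  set JY : PIdx n := ⟨Y, hYne, ne_univ_of_card_lt (by omega)⟩ with hJY
  set JK : PIdx n := ⟨SK, hKne, ne_univ_of_card_lt (lt_of_le_of_lt (le_of_eq cardK) hin)⟩
    with hJK
  set f : MvPolynomial (PIdx n) K := X JX * X JI - X JY * X JK with hf
  have hker : f ∈ Fnl K n n := by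
    rw [Fnl, RingHom.mem_ker, hf]
    simp only [map_sub, map_mul, phiMap, aeval_X]
    rw [phiX, phiI, phiY, phiK]
    ring
  have hpif : piw K w f = X (⟨JX, hXSw⟩ : RIdx n w) * X (⟨JI, hISw⟩ : RIdx n w) := by
    rw [hf]
    simp only [map_sub, map_mul, piw, aeval_X]
    rw [dif_neg hXSw, dif_neg hISw, dif_pos hKSw, mul_zero, sub_zero]
  have hmem : (X (⟨JX, hXSw⟩ : RIdx n w) * X (⟨JI, hISw⟩ : RIdx n w) :
      MvPolynomial (RIdx n w) K) ∈ Fnlw K n n w := by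
    rw [← hpif, Fnlw]
    exact Ideal.mem_map_of_mem _ hker
  have hmono : (X (⟨JX, hXSw⟩ : RIdx n w) * X (⟨JI, hISw⟩ : RIdx n w) :
      MvPolynomial (RIdx n w) K) =
      monomial (Finsupp.single (⟨JX, hXSw⟩ : RIdx n w) 1 +
        Finsupp.single (⟨JI, hISw⟩ : RIdx n w) 1) (1 : K) := by
    rw [← pow_one (X (⟨JX, hXSw⟩ : RIdx n w)), ← pow_one (X (⟨JI, hISw⟩ : RIdx n w)),
      X_pow_eq_monomial, X_pow_eq_monomial, monomial_mul, one_mul]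
  rw [hmono] at hmem
  exact hw.2 _ hmem
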